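/- If u is continuously differentiable on [0,R], u(0) = 0, and u satisfies u'(r) = -2u(r)/r + G(r) for all r ∈ (0,R] where G is continuous, then the limit of 2u(r)/r as r → 0⁺ exists and equals 2G(0)/3, so that u'(0) = G(0)/3. -/

import Mathlib

open Set Filter Topology

theorem velocity_eq_at_center (R : ℝ) (hR : 0 < R) (u G : ℝ → ℝ)
    (hG : ContinuousOn G (Set.Icc 0 R))
    (hu : ContDiffOn ℝ 1 u (Set.Icc 0 R))
    (hu0 : u 0 = 0)
    (heq : ∀ r ∈ Set.Ioc 0 R,
      derivWithin u (Set.Icc 0 R) r = -2 * u r / r + G r) :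
    Tendsto (fun r => 2 * u r / r) (𝓝[Set.Ioc 0 R] 0) (𝓝 (2 * G 0 / 3)) ∧
      derivWithin u (Set.Icc 0 R) 0 = G 0 / 3 := by
  have hUD : UniqueDiffOn ℝ (Set.Icc (0:ℝ) R) := uniqueDiffOn_Icc hR
  have h0mem : (0:ℝ) ∈ Set.Icc 0 R := ⟨le_rfl, hR.le⟩
  set d := derivWithin u (Set.Icc 0 R) 0 with hd
  -- differentiability at 0 within Icc
  have hdiff : DifferentiableOn ℝ u (Set.Icc 0 R) := hu.differentiableOn one_ne_zero
  have hder0 : HasDerivWithinAt u d (Set.Icc 0 R) 0 :=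
    (hdiff 0 h0mem).hasDerivWithinAt
  -- NeBot of the filter
  have hNB : (𝓝[Set.Ioc (0:ℝ) R] 0).NeBot := by
    apply mem_closure_iff_nhdsWithin_neBot.mp
    rw [closure_Ioc hR.ne]
    exact h0mem
  -- slope tends to d
  have hsub : Set.Ioc (0:ℝ) R ⊆ Set.Icc 0 R \ {0} := fun x hx =>
    ⟨⟨hx.1.le, hx.2⟩, ne_of_gt hx.1⟩
  have hslope : Tendsto (fun r => u r / r) (𝓝[Set.Ioc 0 R] 0) (𝓝 d) := by
    have := (hasDerivWithinAt_iff_tendsto_slope.mp hder0).mono_left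
      (nhdsWithin_mono 0 hsub)
    refine this.congr' ?_
    filter_upwards [self_mem_nhdsWithin] with r hr
    simp [slope, hu0, div_eq_inv_mul]
  have h2slope : Tendsto (fun r => 2 * u r / r) (𝓝[Set.Ioc 0 R] 0) (𝓝 (2 * d)) := by
    have := hslope.const_mul 2
    refine this.congr fun r => by ring
  -- derivWithin tends to d
  have hcd : ContinuousOn (derivWithin u (Set.Icc 0 R)) (Set.Icc 0 R) :=
    hu.continuousOn_derivWithin hUD le_rfl
  have hderiv_tendsto : Tendsto (derivWithin u (Set.Icc 0 R)) (𝓝[Set.Ioc 0 R] 0) (𝓝 d) :=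
    (hcd 0 h0mem).mono_left (nhdsWithin_mono 0 (Set.Ioc_subset_Icc_self))
  -- G tends to G 0
  have hGt : Tendsto G (𝓝[Set.Ioc 0 R] 0) (𝓝 (G 0)) :=
    (hG 0 h0mem).mono_left (nhdsWithin_mono 0 (Set.Ioc_subset_Icc_self))
  -- RHS tends to -2d + G 0
  have hrhs : Tendsto (derivWithin u (Set.Icc 0 R)) (𝓝[Set.Ioc 0 R] 0)
      (𝓝 (-(2 * d) + G 0)) := by
    have := (h2slope.neg).add hGt
    refine (Tendsto.congr' ?_ this)
    filter_upwards [self_mem_nhdsWithin] with r hr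
    rw [heq r hr]; ring
  have hdeq : d = -(2 * d) + G 0 := tendsto_nhds_unique hderiv_tendsto hrhs
  have hdval : d = G 0 / 3 := by linarith
  constructor
  · rw [show 2 * G 0 / 3 = 2 * d by rw [hdval]; ring]
    exact h2slope
  · exact hdval
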